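/- If X and Y are topological spaces that are Σ⁰_α-isomorphic for some countable ordinal α ≥ 1, and the Borel hierarchy in X does not collapse (Σ⁰_β(X) ≠ Π⁰_β(X) for all β < ω₁), then the Borel hierarchy in Y does not collapse. -/

import Mathlib

/-- The Borel hierarchy: `Σ⁰₀ = {∅}`, `Σ⁰₁` = open sets, `Σ⁰₂` = countable unions of
differences of open sets, and for `α > 2`, `Σ⁰_α` = countable unions of complements of
sets from lower levels. -/
noncomputable def SigmaO (X : Type*) [TopologicalSpace X] : Ordinal → Set (Set X) :=
  WellFounded.fix Ordinal.lt_wf fun α ih =>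
    if α = 0 then {(∅ : Set X)}
    else if α = 1 then {s | IsOpen s}
    else if α = 2 then
      {s | ∃ f g : ℕ → Set X, (∀ n, IsOpen (f n) ∧ IsOpen (g n)) ∧ s = ⋃ n, f n \ g n}
    else
      {s | ∃ (β : ℕ → Ordinal) (A : ℕ → Set X),
        (∀ n, ∃ h : β n < α, A n ∈ ih (β n) h) ∧ s = ⋃ n, (A n)ᶜ}

/-- The dual classes `Π⁰_α`. -/
noncomputable def PiO (X : Type*) [TopologicalSpace X] (α : Ordinal) : Set (Set X) :=
  {s | sᶜ ∈ SigmaO X α}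

set_option linter.unusedSectionVars false

section Aux
variable {X : Type*} [TopologicalSpace X]

theorem sigmaO_eq (α : Ordinal) :
    SigmaO X α =
      if α = 0 then {(∅ : Set X)}
      else if α = 1 then {s | IsOpen s}
      else if α = 2 then
        {s | ∃ f g : ℕ → Set X, (∀ n, IsOpen (f n) ∧ IsOpen (g n)) ∧ s = ⋃ n, f n \ g n}
      else
        {s | ∃ (β : ℕ → Ordinal) (A : ℕ → Set X),
          (∀ n, β n < α ∧ A n ∈ SigmaO X (β n)) ∧ s = ⋃ n, (A n)ᶜ} := by
  rw [SigmaO, WellFounded.fix_eq]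
  simp only [exists_prop]

theorem sigmaO_zero : SigmaO X 0 = {(∅ : Set X)} := by
  rw [sigmaO_eq]; simp

theorem sigmaO_one : SigmaO X 1 = {s : Set X | IsOpen s} := by
  rw [sigmaO_eq]; norm_num

theorem sigmaO_two : SigmaO X 2 =
    {s : Set X | ∃ f g : ℕ → Set X, (∀ n, IsOpen (f n) ∧ IsOpen (g n)) ∧ s = ⋃ n, f n \ g n} := by
  rw [sigmaO_eq]; norm_num

theorem sigmaO_of_two_lt {α : Ordinal} (h : 2 < α) : SigmaO X α =
    {s : Set X | ∃ (β : ℕ → Ordinal) (A : ℕ → Set X),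
      (∀ n, β n < α ∧ A n ∈ SigmaO X (β n)) ∧ s = ⋃ n, (A n)ᶜ} := by
  rw [sigmaO_eq]
  have h0 : α ≠ 0 := by rintro rfl; exact absurd h (by norm_num)
  have h1 : α ≠ 1 := by rintro rfl; norm_num at h
  have h2 : α ≠ 2 := by rintro rfl; norm_num at h
  simp [h0, h1, h2]

theorem two_lt_of_ne {α : Ordinal} (h0 : α ≠ 0) (h1 : α ≠ 1) (h2 : α ≠ 2) : 2 < α := by
  have hh1 : 1 ≤ α := Ordinal.one_le_iff_ne_zero.mpr h0
  have hlt : 1 < α := lt_of_le_of_ne hh1 (Ne.symm h1)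
  have : (2 : Ordinal) ≤ α := by rw [← Ordinal.succ_one]; exact Order.succ_le_of_lt hlt
  exact lt_of_le_of_ne this (Ne.symm h2)

theorem iUnion_pair_eq {S : ℕ → ℕ → Set X} :
    (⋃ i, ⋃ j, S i j) =
      ⋃ n, S ((Denumerable.eqv (ℕ × ℕ)).symm n).1 ((Denumerable.eqv (ℕ × ℕ)).symm n).2 := by
  ext x
  simp only [Set.mem_iUnion]
  constructor
  · rintro ⟨i, j, h⟩
    exact ⟨Denumerable.eqv (ℕ × ℕ) (i, j), by simpa using h⟩
  · rintro ⟨n, h⟩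
    exact ⟨_, _, h⟩

theorem isClosed_mem_sigmaO_two {s : Set X} (hs : IsClosed s) : s ∈ SigmaO X 2 := by
  rw [sigmaO_two]
  refine ⟨fun _ => Set.univ, fun _ => sᶜ, fun n => ⟨isOpen_univ, hs.isOpen_compl⟩, ?_⟩
  simp [Set.diff_eq, Set.iUnion_const]

theorem isOpen_mem_sigmaO_two {s : Set X} (hs : IsOpen s) : s ∈ SigmaO X 2 := by
  rw [sigmaO_two]
  exact ⟨fun _ => s, fun _ => ∅, fun n => ⟨hs, isOpen_empty⟩, by simp [Set.iUnion_const]⟩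

theorem empty_mem_sigmaO (α : Ordinal) : (∅ : Set X) ∈ SigmaO X α := by
  rcases eq_or_ne α 0 with rfl | h0
  · rw [sigmaO_zero]; rfl
  rcases eq_or_ne α 1 with rfl | h1
  · rw [sigmaO_one]; exact isOpen_empty
  rcases eq_or_ne α 2 with rfl | h2
  · exact isOpen_mem_sigmaO_two isOpen_empty
  have h : 2 < α := two_lt_of_ne h0 h1 h2
  rw [sigmaO_of_two_lt h]
  refine ⟨fun _ => 1, fun _ => Set.univ, fun n => ⟨lt_trans (by norm_num) h, ?_⟩, by simp⟩
  rw [sigmaO_one]; exact isOpen_univ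

/-- Countable union closure for `α ≥ 1`. -/
theorem iUnion_mem_sigmaO {α : Ordinal} (hα : 1 ≤ α) (A : ℕ → Set X)
    (hA : ∀ n, A n ∈ SigmaO X α) : (⋃ n, A n) ∈ SigmaO X α := by
  have h0 : α ≠ 0 := by rintro rfl; exact absurd hα (by norm_num)
  rcases eq_or_ne α 1 with rfl | h1
  · rw [sigmaO_one] at *; exact isOpen_iUnion hA
  rcases eq_or_ne α 2 with rfl | h2
  · rw [sigmaO_two] at *
    choose F G hFG hU using hA
    let e : ℕ ≃ ℕ × ℕ := (Denumerable.eqv (ℕ × ℕ)).symm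
    refine ⟨fun n => F (e n).1 (e n).2, fun n => G (e n).1 (e n).2,
      fun n => hFG _ _, ?_⟩
    rw [Set.iUnion_congr hU]
    exact iUnion_pair_eq
  have h : 2 < α := two_lt_of_ne h0 h1 h2
  rw [sigmaO_of_two_lt h] at *
  choose β B hB hU using hA
  let e : ℕ ≃ ℕ × ℕ := (Denumerable.eqv (ℕ × ℕ)).symm
  refine ⟨fun n => β (e n).1 (e n).2, fun n => B (e n).1 (e n).2,
    fun n => hB _ _, ?_⟩
  rw [Set.iUnion_congr hU]
  exact iUnion_pair_eq (S := fun i j => (B i j)ᶜ)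

end Aux

section Aux2
variable {X : Type*} [TopologicalSpace X]

theorem compl_union_mem_sigmaO_two {f g : Set X} (hf : IsOpen f) (hg : IsOpen g) :
    fᶜ ∪ g ∈ SigmaO X 2 := by
  rw [sigmaO_two]
  refine ⟨fun n => if n = 0 then Set.univ else g, fun n => if n = 0 then f else ∅,
    fun n => by dsimp only; split <;> simp [hf, hg, isOpen_univ, isOpen_empty], ?_⟩
  ext x
  simp only [Set.mem_union, Set.mem_iUnion, Set.mem_diff, Set.mem_compl_iff]
  constructor
  · rintro (hx | hx)
    · exact ⟨0, by simp [hx]⟩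
    · exact ⟨1, by simp [hx]⟩
  · rintro ⟨n, hn⟩
    rcases eq_or_ne n 0 with rfl | h
    · simp only [if_pos rfl] at hn; exact Or.inl hn.2
    · simp only [if_neg h] at hn; exact Or.inr hn.1

theorem sigmaO_mono {β γ : Ordinal} (h : β ≤ γ) : SigmaO X β ⊆ SigmaO X γ := by
  rcases eq_or_lt_of_le h with rfl | h
  · exact subset_rfl
  intro s hs
  have hγ0 : γ ≠ 0 := fun hh => by subst hh; exact absurd h (by simp)
  rcases eq_or_ne γ 1 with rfl | hγ1
  · have hβ : β = 0 := Ordinal.lt_one_iff_zero.mp h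
    subst hβ
    rw [sigmaO_zero] at hs
    rw [Set.mem_singleton_iff] at hs
    subst hs
    exact empty_mem_sigmaO 1
  rcases eq_or_ne γ 2 with rfl | hγ2
  · have hβ : β ≤ 1 := by
      have : β < Order.succ (1 : Ordinal) := by simpa using h
      exact Order.lt_succ_iff.mp this
    rcases eq_or_ne β 1 with rfl | hβ1
    · rw [sigmaO_one] at hs
      exact isOpen_mem_sigmaO_two hs
    · have hβ0 : β = 0 := by
        rcases eq_or_lt_of_le hβ with h' | h'
        · exact absurd h' hβ1
        · exact Ordinal.lt_one_iff_zero.mp h'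
      subst hβ0
      rw [sigmaO_zero, Set.mem_singleton_iff] at hs
      subst hs
      exact empty_mem_sigmaO 2
  have hγ : 2 < γ := two_lt_of_ne hγ0 hγ1 hγ2
  rcases eq_or_ne β 0 with rfl | hβ0
  · rw [sigmaO_zero, Set.mem_singleton_iff] at hs
    subst hs
    exact empty_mem_sigmaO γ
  rcases eq_or_ne β 1 with rfl | hβ1
  · rw [sigmaO_one] at hs
    rw [sigmaO_of_two_lt hγ]
    refine ⟨fun _ => 2, fun _ => sᶜ, fun n => ⟨hγ, isClosed_mem_sigmaO_two hs.isClosed_compl⟩, ?_⟩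
    simp [Set.iUnion_const]
  rcases eq_or_ne β 2 with rfl | hβ2
  · rw [sigmaO_two] at hs
    obtain ⟨F, G, hFG, rfl⟩ := hs
    rw [sigmaO_of_two_lt hγ]
    refine ⟨fun _ => 2, fun n => (F n)ᶜ ∪ G n,
      fun n => ⟨hγ, compl_union_mem_sigmaO_two (hFG n).1 (hFG n).2⟩, ?_⟩
    refine Set.iUnion_congr fun n => ?_
    rw [Set.compl_union, compl_compl, Set.diff_eq]
  have hβ : 2 < β := two_lt_of_ne hβ0 hβ1 hβ2
  rw [sigmaO_of_two_lt hβ] at hs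
  obtain ⟨δ, A, hA, rfl⟩ := hs
  rw [sigmaO_of_two_lt hγ]
  exact ⟨δ, A, fun n => ⟨lt_trans (hA n).1 h, (hA n).2⟩, rfl⟩

end Aux2

section Aux3
variable {X : Type*} [TopologicalSpace X]

theorem sigmaO_subset_of_collapse {γ : Ordinal} (hγ : 1 ≤ γ)
    (hcol : SigmaO X γ = PiO X γ) :
    ∀ δ : Ordinal, γ ≤ δ → SigmaO X δ ⊆ SigmaO X γ := by
  have hcompl : ∀ t ∈ SigmaO X γ, tᶜ ∈ SigmaO X γ := by
    intro t ht
    rw [hcol] at ht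
    exact ht
  intro δ
  induction δ using Ordinal.induction with
  | h δ IH =>
  intro hle s hs
  rcases eq_or_lt_of_le hle with rfl | hlt
  · exact hs
  have hδ1 : 1 < δ := lt_of_le_of_lt hγ hlt
  rcases eq_or_ne δ 2 with rfl | hδ2
  · have hγ1 : γ = 1 := by
      have : γ ≤ 1 := by
        have : γ < Order.succ (1 : Ordinal) := by simpa using hlt
        exact Order.lt_succ_iff.mp this
      exact le_antisymm this hγ
    subst hγ1
    rw [sigmaO_two] at hs
    obtain ⟨F, G, hFG, rfl⟩ := hs
    rw [sigmaO_one]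
    refine isOpen_iUnion fun n => ?_
    have hGc : IsOpen (G n)ᶜ := by
      have := hcompl (G n) (by rw [sigmaO_one]; exact (hFG n).2)
      rwa [sigmaO_one] at this
    rw [Set.diff_eq]
    exact (hFG n).1.inter hGc
  · have hδ : 2 < δ := two_lt_of_ne (by rintro rfl; exact absurd hδ1 (by norm_num))
      (ne_of_gt hδ1) hδ2
    rw [sigmaO_of_two_lt hδ] at hs
    obtain ⟨β, A, hA, rfl⟩ := hs
    refine iUnion_mem_sigmaO hγ _ fun n => ?_
    refine hcompl _ ?_
    rcases le_or_gt (β n) γ with hle' | hlt'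
    · exact sigmaO_mono hle' (hA n).2
    · exact IH (β n) (hA n).1 (le_of_lt hlt') (hA n).2

theorem collapse_mono {γ δ : Ordinal} (hγ : 1 ≤ γ) (hcol : SigmaO X γ = PiO X γ)
    (h : γ ≤ δ) : SigmaO X δ = PiO X δ := by
  have hs : SigmaO X δ = SigmaO X γ :=
    le_antisymm (sigmaO_subset_of_collapse hγ hcol δ h) (sigmaO_mono h)
  have hcompl : ∀ t ∈ SigmaO X γ, tᶜ ∈ SigmaO X γ := by
    intro t ht; rw [hcol] at ht; exact ht
  rw [hs]
  ext s
  simp only [PiO, Set.mem_setOf_eq, hs]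
  constructor
  · exact fun h' => hcompl s h'
  · intro h'
    have := hcompl _ h'
    rwa [compl_compl] at this

end Aux3

theorem sigmaO_pullback {X Y : Type*} [TopologicalSpace X] [TopologicalSpace Y]
    (g : X → Y) {α : Ordinal} (hα1 : 1 ≤ α)
    (hg : ∀ A ∈ SigmaO Y α, g ⁻¹' A ∈ SigmaO X α) :
    ∀ γ : Ordinal, α ≤ γ → ∀ A ∈ SigmaO Y γ, g ⁻¹' A ∈ SigmaO X γ := by
  intro γ
  induction γ using Ordinal.induction with
  | h γ IH =>
  intro hγ A hA
  rcases eq_or_lt_of_le hγ with rfl | hlt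
  · exact hg A hA
  have hγ1 : 1 < γ := lt_of_le_of_lt hα1 hlt
  rcases eq_or_ne γ 2 with rfl | hγ2
  · have hα : α = 1 := by
      have : α ≤ 1 := by
        have : α < Order.succ (1 : Ordinal) := by simpa using hlt
        exact Order.lt_succ_iff.mp this
      exact le_antisymm this hα1
    subst hα
    rw [sigmaO_two] at hA ⊢
    obtain ⟨F, G, hFG, rfl⟩ := hA
    have hopen : ∀ (s : Set Y), IsOpen s → IsOpen (g ⁻¹' s) := by
      intro s hs
      have := hg s (by rw [sigmaO_one]; exact hs)
      rwa [sigmaO_one] at this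
    refine ⟨fun n => g ⁻¹' F n, fun n => g ⁻¹' G n,
      fun n => ⟨hopen _ (hFG n).1, hopen _ (hFG n).2⟩, ?_⟩
    simp [Set.preimage_iUnion, Set.preimage_diff]
  · have hγgt : 2 < γ := two_lt_of_ne (by rintro rfl; exact absurd hγ1 (by norm_num))
      (ne_of_gt hγ1) hγ2
    rw [sigmaO_of_two_lt hγgt] at hA ⊢
    obtain ⟨δ, A', h1, rfl⟩ := hA
    refine ⟨fun n => max (δ n) α, fun n => g ⁻¹' A' n, fun n =>
      ⟨max_lt (h1 n).1 hlt, IH _ (max_lt (h1 n).1 hlt) (le_max_right _ _) _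
        (sigmaO_mono (le_max_left _ _) (h1 n).2)⟩, ?_⟩
    simp [Set.preimage_iUnion, Set.preimage_compl]

theorem sigmaO_lift_eq {X : Type*} [TopologicalSpace X] :
    ∀ (α : Ordinal.{u}) (β : Ordinal.{v}),
      Ordinal.lift.{v} α = Ordinal.lift.{u} β → SigmaO X α = SigmaO X β := by
  intro α
  induction α using Ordinal.induction with
  | h α IH =>
  intro β hβ
  have iff0 : α = 0 ↔ β = 0 := by
    constructor
    · rintro rfl
      have : Ordinal.lift.{u} β = 0 := by rw [← hβ]; simp
      exact Ordinal.lift_inj.mp (by rw [this]; simp)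
    · rintro rfl
      have : Ordinal.lift.{v} α = 0 := by rw [hβ]; simp
      exact Ordinal.lift_inj.mp (by rw [this]; simp)
  have iff1 : α = 1 ↔ β = 1 := by
    constructor
    · rintro rfl
      have : Ordinal.lift.{u} β = 1 := by rw [← hβ]; simp
      exact Ordinal.lift_inj.mp (by rw [this]; simp)
    · rintro rfl
      have : Ordinal.lift.{v} α = 1 := by rw [hβ]; simp
      exact Ordinal.lift_inj.mp (by rw [this]; simp)
  have iff2 : α = 2 ↔ β = 2 := by
    constructor
    · rintro rfl
      have h22 : Ordinal.lift.{u} β = Ordinal.lift.{u} (2 : Ordinal.{v}) := by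
        rw [← hβ]; simp
      exact Ordinal.lift_inj.mp h22
    · rintro rfl
      have h22 : Ordinal.lift.{v} α = Ordinal.lift.{v} (2 : Ordinal.{u}) := by
        rw [hβ]; simp
      exact Ordinal.lift_inj.mp h22
  rcases eq_or_ne α 0 with rfl | h0
  · obtain rfl := iff0.mp rfl
    rw [sigmaO_eq, sigmaO_eq]; simp
  rcases eq_or_ne α 1 with rfl | h1
  · obtain rfl := iff1.mp rfl
    rw [sigmaO_eq, sigmaO_eq]; norm_num
  rcases eq_or_ne α 2 with rfl | h2
  · obtain rfl := iff2.mp rfl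
    rw [sigmaO_eq, sigmaO_eq]; norm_num
  have hα2 : 2 < α := two_lt_of_ne h0 h1 h2
  have hβ2 : 2 < β := two_lt_of_ne (fun h => h0 (iff0.mpr h)) (fun h => h1 (iff1.mpr h))
    (fun h => h2 (iff2.mpr h))
  rw [sigmaO_of_two_lt hα2, sigmaO_of_two_lt hβ2]
  ext s
  simp only [Set.mem_setOf_eq]
  constructor
  · rintro ⟨δ, A, h1', rfl⟩
    have key : ∀ n, ∃ δ' : Ordinal.{v}, Ordinal.lift.{u} δ' = Ordinal.lift.{v} (δ n) := by
      intro n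
      apply Ordinal.mem_range_lift_of_le
      rw [← hβ]
      exact le_of_lt (Ordinal.lift_lt.mpr (h1' n).1)
    choose δ' hδ' using key
    refine ⟨δ', A, fun n => ⟨?_, ?_⟩, rfl⟩
    · have : Ordinal.lift.{u} (δ' n) < Ordinal.lift.{u} β := by
        rw [hδ' n, ← hβ]
        exact Ordinal.lift_lt.mpr (h1' n).1
      exact Ordinal.lift_lt.mp this
    · rw [← IH (δ n) (h1' n).1 (δ' n) (hδ' n).symm]
      exact (h1' n).2
  · rintro ⟨δ', A, h1', rfl⟩
    have key : ∀ n, ∃ δ : Ordinal.{u}, Ordinal.lift.{v} δ = Ordinal.lift.{u} (δ' n) := by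
      intro n
      apply Ordinal.mem_range_lift_of_le
      rw [hβ]
      exact le_of_lt (Ordinal.lift_lt.mpr (h1' n).1)
    choose δ hδ using key
    have hlt : ∀ n, δ n < α := by
      intro n
      have : Ordinal.lift.{v} (δ n) < Ordinal.lift.{v} α := by
        rw [hδ n, hβ]
        exact Ordinal.lift_lt.mpr (h1' n).1
      exact Ordinal.lift_lt.mp this
    refine ⟨δ, A, fun n => ⟨hlt n, ?_⟩, rfl⟩
    rw [IH (δ n) (hlt n) (δ' n) (hδ n)]
    exact (h1' n).2

theorem lift_aleph_one_ord.{u, v} :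
    Ordinal.lift.{v} ((Cardinal.aleph 1).ord : Ordinal.{u}) = (Cardinal.aleph 1).ord := by
  simp [Cardinal.lift_ord]

theorem exists_lift_eq.{u, v} {a : Ordinal.{u}} (ha : a < (Cardinal.aleph 1).ord) :
    ∃ a' : Ordinal.{v}, Ordinal.lift.{u} a' = Ordinal.lift.{v} a ∧
      a' < (Cardinal.aleph 1).ord := by
  have h1 : Ordinal.lift.{v} a < Ordinal.lift.{v} ((Cardinal.aleph 1).ord : Ordinal.{u}) :=
    Ordinal.lift_lt.mpr ha
  rw [lift_aleph_one_ord.{u, v}, ← lift_aleph_one_ord.{v, u}] at h1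
  obtain ⟨a', ha'⟩ := Ordinal.mem_range_lift_of_le (le_of_lt h1)
  refine ⟨a', ha', ?_⟩
  have h2 : Ordinal.lift.{u} a' < Ordinal.lift.{u} ((Cardinal.aleph 1).ord : Ordinal.{v}) := by
    rw [ha']; exact h1
  exact Ordinal.lift_lt.mp h2

theorem collapse_transfer.{u, v} {X : Type*} [TopologicalSpace X] {δ : Ordinal.{u}}
    (hδ : δ < (Cardinal.aleph 1).ord) (hc : SigmaO X δ = PiO X δ) :
    ∃ δ' : Ordinal.{v}, δ' < (Cardinal.aleph 1).ord ∧ SigmaO X δ' = PiO X δ' := by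
  obtain ⟨δ', he, hlt⟩ := exists_lift_eq hδ
  refine ⟨δ', hlt, ?_⟩
  have hs : SigmaO X δ' = SigmaO X δ := sigmaO_lift_eq δ' δ he
  calc SigmaO X δ' = SigmaO X δ := hs
    _ = PiO X δ := hc
    _ = PiO X δ' := by ext s; simp only [PiO, Set.mem_setOf_eq, hs]

/-- If `X` and `Y` are `Σ⁰_α`-isomorphic (for a countable ordinal `α ≥ 1`) and the Borel
hierarchy in `X` does not collapse, then the Borel hierarchy in `Y` does not collapse. -/
theorem borel_noncollapse_of_sigma_iso {X Y : Type*} [TopologicalSpace X] [TopologicalSpace Y]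
    (α : Ordinal) (hα1 : 1 ≤ α) (hα : α < (Cardinal.aleph 1).ord)
    (f : X ≃ Y)
    (hf : ∀ A ∈ SigmaO Y α, f ⁻¹' A ∈ SigmaO X α)
    (hf' : ∀ A ∈ SigmaO X α, f.symm ⁻¹' A ∈ SigmaO Y α)
    (hX : ∀ β : Ordinal, β < (Cardinal.aleph 1).ord → SigmaO X β ≠ PiO X β) :
    ∀ β : Ordinal, β < (Cardinal.aleph 1).ord → SigmaO Y β ≠ PiO Y β := by
  intro β hβ hcol
  -- Transfer `α` to the universe of `β`.
  obtain ⟨α', hα'eq, hα'lt⟩ := exists_lift_eq hα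
  have hmaxlt : max α' β < (Cardinal.aleph 1).ord := max_lt hα'lt hβ
  have hα'ne : α' ≠ 0 := by
    rintro rfl
    have h0 : Ordinal.lift α = 0 := by simpa using hα'eq.symm
    have hz : α = 0 := by
      have := Ordinal.lift_inj (a := α) (b := 0)
      simp only [Ordinal.lift_zero] at this
      exact this.mp h0
    subst hz
    exact absurd hα1 (by norm_num)
  have hα'1 : 1 ≤ α' := Ordinal.one_le_iff_ne_zero.mpr hα'ne
  have hSX : SigmaO X α' = SigmaO X α := sigmaO_lift_eq α' α hα'eq
  have hSY : SigmaO Y α' = SigmaO Y α := sigmaO_lift_eq α' α hα'eq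
  have hfA : ∀ A ∈ SigmaO Y α', f ⁻¹' A ∈ SigmaO X α' := by
    intro A hA
    rw [hSX]
    exact hf A (hSY ▸ hA)
  have hfA' : ∀ A ∈ SigmaO X α', f.symm ⁻¹' A ∈ SigmaO Y α' := by
    intro A hA
    rw [hSY]
    exact hf' A (hSX ▸ hA)
  -- produce a collapse in `X` at some level in the universe of `β`
  have key : ∃ δ, δ < (Cardinal.aleph 1).ord ∧ SigmaO X δ = PiO X δ := by
    by_cases hβ0 : β = 0
    · subst hβ0
      have hY : (Set.univ : Set Y) = ∅ := by
        have h1 : (Set.univ : Set Y) ∈ PiO Y 0 := by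
          simp [PiO, sigmaO_zero]
        rw [← hcol, sigmaO_zero, Set.mem_singleton_iff] at h1
        exact h1
      have hempty : IsEmpty Y := Set.univ_eq_empty_iff.mp hY
      have hXempty : IsEmpty X := f.isEmpty
      refine ⟨1, lt_of_le_of_lt hα'1 hα'lt, ?_⟩
      ext s
      have hs : s = ∅ := Set.eq_empty_of_isEmpty s
      have hsc : sᶜ = ∅ := Set.eq_empty_of_isEmpty sᶜ
      simp only [PiO, Set.mem_setOf_eq, sigmaO_one]
      rw [hsc, hs]
    · have hβ1 : 1 ≤ β := Ordinal.one_le_iff_ne_zero.mpr hβ0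
      have hδlt : max β α' < (Cardinal.aleph 1).ord := max_lt hβ hα'lt
      have hcolδ : SigmaO Y (max β α') = PiO Y (max β α') :=
        collapse_mono hβ1 hcol (le_max_left β α')
      have hfδ : ∀ A ∈ SigmaO Y (max β α'), f ⁻¹' A ∈ SigmaO X (max β α') :=
        fun A hA => sigmaO_pullback f hα'1 hfA _ (le_max_right β α') A hA
      have hf'δ : ∀ A ∈ SigmaO X (max β α'), f.symm ⁻¹' A ∈ SigmaO Y (max β α') :=
        fun A hA => sigmaO_pullback f.symm hα'1 hfA' _ (le_max_right β α') A hA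
      refine ⟨max β α', hδlt, ?_⟩
      ext s
      simp only [PiO, Set.mem_setOf_eq]
      constructor
      · intro hs
        have h1 : f.symm ⁻¹' s ∈ SigmaO Y (max β α') := hf'δ s hs
        have h2 : (f.symm ⁻¹' s)ᶜ ∈ SigmaO Y (max β α') := by
          rw [hcolδ] at h1; exact h1
        rw [← Set.preimage_compl] at h2
        have h3 := hfδ _ h2
        rwa [show f ⁻¹' (f.symm ⁻¹' sᶜ) = sᶜ by ext x; simp] at h3
      · intro hs
        have h1 : f.symm ⁻¹' sᶜ ∈ SigmaO Y (max β α') := hf'δ _ hs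
        have h2 : f.symm ⁻¹' s ∈ PiO Y (max β α') := by
          simpa [PiO, Set.preimage_compl] using h1
        rw [← hcolδ] at h2
        have h3 := hfδ _ h2
        rwa [show f ⁻¹' (f.symm ⁻¹' s) = s by ext x; simp] at h3
  obtain ⟨δ, hδlt, hδcol⟩ := key
  obtain ⟨δ', hδ'lt, hδ'col⟩ := collapse_transfer hδlt hδcol
  exact hX δ' hδ'lt hδ'col
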